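/- Suppose X, Y, A, B, A', B', W are jointly distributed finitely-valued random variables with H(W|X,Y)=0, max{H(W|X), H(W|Y)} ≤ δ, H(W|A) ≤ I(X:Y|A) − I(X:Y|W) + δ, and H(W|B) ≤ I(X:Y|B) − I(X:Y|W) + δ. Then 2·I(X:Y) ≤ I(X:Y|A) + I(X:Y|B) + I(A:B) + I(X:Y|A') + I(X:Y|B') + I(A':B') + C·δ for some absolute constant C (one may take C = 6). -/

import Mathlib

open scoped BigOperators

namespace PaperIngleton

open Classical in
/-- Probability of an event under a pmf `p` on a finite sample space. -/
noncomputable def prob {Ω : Type*} [Fintype Ω] (p : Ω → ℝ) (E : Ω → Prop) : ℝ :=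
  ∑ ω, if E ω then p ω else 0

/-- Shannon entropy of a finitely-valued random variable `X` under pmf `p`. -/
noncomputable def ent {Ω S : Type*} [Fintype Ω] [Fintype S] (p : Ω → ℝ) (X : Ω → S) : ℝ :=
  -∑ s : S, prob p (fun ω => X ω = s) * Real.log (prob p (fun ω => X ω = s))

/-- Conditional entropy `H(X|Y)`. -/
noncomputable def condEnt {Ω S T : Type*} [Fintype Ω] [Fintype S] [Fintype T]
    (p : Ω → ℝ) (X : Ω → S) (Y : Ω → T) : ℝ :=
  ent p (fun ω => (X ω, Y ω)) - ent p Y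

/-- Mutual information `I(X:Y)`. -/
noncomputable def mi {Ω S T : Type*} [Fintype Ω] [Fintype S] [Fintype T]
    (p : Ω → ℝ) (X : Ω → S) (Y : Ω → T) : ℝ :=
  ent p X + ent p Y - ent p (fun ω => (X ω, Y ω))

/-- Conditional mutual information `I(X:Y|Z)`. -/
noncomputable def cmi {Ω S T U : Type*} [Fintype Ω] [Fintype S] [Fintype T] [Fintype U]
    (p : Ω → ℝ) (X : Ω → S) (Y : Ω → T) (Z : Ω → U) : ℝ :=
  ent p (fun ω => (X ω, Z ω)) + ent p (fun ω => (Y ω, Z ω))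
    - ent p (fun ω => (X ω, Y ω, Z ω)) - ent p Z

end PaperIngleton

namespace PaperIngleton

/-! ### Auxiliary lemmas -/

section Aux

open Classical

set_option linter.unusedSectionVars false

variable {Ω S T U : Type*} [Fintype Ω] [Fintype S] [Fintype T] [Fintype U]

lemma prob_nonneg (p : Ω → ℝ) (hp : ∀ ω, 0 ≤ p ω) (E : Ω → Prop) : 0 ≤ prob p E := by
  refine Finset.sum_nonneg fun ω _ => ?_
  split <;> simp [hp ω]

lemma prob_congr (p : Ω → ℝ) {E E' : Ω → Prop} (h : ∀ ω, E ω ↔ E' ω) :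
    prob p E = prob p E' := by
  unfold prob
  exact Finset.sum_congr rfl fun ω _ => by rw [if_congr (h ω) rfl rfl]

lemma prob_false (p : Ω → ℝ) {E : Ω → Prop} (h : ∀ ω, ¬ E ω) : prob p E = 0 := by
  unfold prob
  refine Finset.sum_eq_zero fun ω _ => if_neg (h ω)

open Classical in
lemma sum_prob (p : Ω → ℝ) (F : Ω → S) : ∑ s, prob p (fun ω => F ω = s) = ∑ ω, p ω := by
  unfold prob
  rw [Finset.sum_comm]
  refine Finset.sum_congr rfl fun ω _ => ?_
  simp [Finset.sum_ite_eq, Finset.sum_ite_eq']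

lemma prob_comp' [DecidableEq T] (p : Ω → ℝ) (F : Ω → S) (g : S → T) (t : T) :
    prob p (fun ω => g (F ω) = t)
      = ∑ s, if g s = t then prob p (fun ω => F ω = s) else 0 := by
  classical
  unfold prob
  have : ∀ s : S, (if g s = t then ∑ ω, if F ω = s then p ω else 0 else 0)
      = ∑ ω, if g s = t ∧ F ω = s then p ω else 0 := by
    intro s
    by_cases h : g s = t <;> simp [h]
  rw [Finset.sum_congr rfl fun s _ => this s, Finset.sum_comm]
  refine Finset.sum_congr rfl fun ω _ => ?_
  rw [Finset.sum_eq_single (F ω)]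
  · by_cases h : g (F ω) = t <;> simp [h]
  · intro s _ hs
    simp [Ne.symm hs]
  · simp

lemma sum_fiber {α β : Type*} [Fintype α] [Fintype β] [DecidableEq β]
    (f : α → β) (a : α → ℝ) (L : β → ℝ) :
    ∑ t, (∑ σ, if f σ = t then a σ else 0) * L t = ∑ σ, a σ * L (f σ) := by
  have : ∀ t, (∑ σ, if f σ = t then a σ else 0) * L t
      = ∑ σ, if f σ = t then a σ * L t else 0 := by
    intro t
    rw [Finset.sum_mul]
    exact Finset.sum_congr rfl fun σ _ => by by_cases h : f σ = t <;> simp [h]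
  rw [Finset.sum_congr rfl fun t _ => this t, Finset.sum_comm]
  refine Finset.sum_congr rfl fun σ _ => ?_
  simp [Finset.sum_ite_eq]

lemma ent_comp (p : Ω → ℝ) (F : Ω → S) (g : S → T) :
    ent p (fun ω => g (F ω)) = -∑ σ, prob p (fun ω => F ω = σ)
      * Real.log (prob p (fun ω => g (F ω) = g σ)) := by
  classical
  unfold ent
  congr 1
  have h1 : ∀ t, prob p (fun ω => g (F ω) = t)
      = ∑ σ, if g σ = t then prob p (fun ω => F ω = σ) else 0 := prob_comp' p F g
  calc ∑ t, prob p (fun ω => g (F ω) = t) * Real.log (prob p (fun ω => g (F ω) = t))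
      = ∑ t, (∑ σ, if g σ = t then prob p (fun ω => F ω = σ) else 0)
          * Real.log (prob p (fun ω => g (F ω) = t)) :=
        Finset.sum_congr rfl fun t _ => by rw [← h1 t]
    _ = ∑ σ, prob p (fun ω => F ω = σ) * Real.log (prob p (fun ω => g (F ω) = g σ)) :=
        sum_fiber g _ (fun t => Real.log (prob p (fun ω => g (F ω) = t)))

lemma prob_le_comp (p : Ω → ℝ) (hp : ∀ ω, 0 ≤ p ω) (F : Ω → S) (g : S → T) (σ : S) :
    prob p (fun ω => F ω = σ) ≤ prob p (fun ω => g (F ω) = g σ) := by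
  classical
  unfold prob
  refine Finset.sum_le_sum fun ω _ => ?_
  by_cases h : F ω = σ
  · simp [h]
  · simp only [h, if_false]
    split <;> simp [hp ω]

lemma prob_marg (p : Ω → ℝ) (X : Ω → S) (Z : Ω → U) (z : U) :
    ∑ x, prob p (fun ω => (X ω, Z ω) = (x, z)) = prob p (fun ω => Z ω = z) := by
  classical
  unfold prob
  rw [Finset.sum_comm]
  refine Finset.sum_congr rfl fun ω _ => ?_
  by_cases hz : Z ω = z <;> simp [Prod.ext_iff, hz, Finset.sum_ite_eq]

/-- Abstract core of the submodularity inequality. -/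
lemma sum_core {α : Type*} [Fintype α] (A B C D : α → ℝ)
    (hA : ∀ σ, 0 ≤ A σ)
    (hB : ∀ σ, 0 ≤ B σ) (hC : ∀ σ, 0 ≤ C σ) (hD : ∀ σ, 0 ≤ D σ)
    (hab : ∀ σ, A σ ≤ B σ) (hac : ∀ σ, A σ ≤ C σ) (had : ∀ σ, A σ ≤ D σ)
    (hsum : ∑ σ, A σ = 1)
    (hcount : ∑ σ, (if D σ = 0 then 0 else B σ * C σ / D σ) ≤ 1) :
    0 ≤ ∑ σ, A σ * (Real.log (A σ) + Real.log (D σ) - Real.log (B σ) - Real.log (C σ)) := by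
  classical
  have key : ∀ σ, (if A σ = 0 then 0 else A σ - B σ * C σ / D σ)
      ≤ A σ * (Real.log (A σ) + Real.log (D σ) - Real.log (B σ) - Real.log (C σ)) := by
    intro σ
    by_cases h : A σ = 0
    · simp [h]
    · have hA0 : 0 < A σ := lt_of_le_of_ne (hA σ) (Ne.symm h)
      have hB0 : 0 < B σ := lt_of_lt_of_le hA0 (hab σ)
      have hC0 : 0 < C σ := lt_of_lt_of_le hA0 (hac σ)
      have hD0 : 0 < D σ := lt_of_lt_of_le hA0 (had σ)
      have hlog : Real.log (B σ * C σ / (A σ * D σ)) ≤ B σ * C σ / (A σ * D σ) - 1 :=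
        Real.log_le_sub_one_of_pos (by positivity)
      have hexp : Real.log (B σ * C σ / (A σ * D σ))
          = Real.log (B σ) + Real.log (C σ) - (Real.log (A σ) + Real.log (D σ)) := by
        rw [Real.log_div (by positivity) (by positivity),
          Real.log_mul hB0.ne' hC0.ne', Real.log_mul hA0.ne' hD0.ne']
      rw [hexp] at hlog
      have h3 := mul_le_mul_of_nonneg_left hlog hA0.le
      have h4 : A σ * (B σ * C σ / (A σ * D σ) - 1) = B σ * C σ / D σ - A σ := by
        field_simp
      rw [h4] at h3
      rw [if_neg h]
      nlinarith [h3]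
  have step1 : ∀ σ, (if A σ = 0 then 0 else A σ - B σ * C σ / D σ)
      = A σ - (if A σ = 0 then 0 else B σ * C σ / D σ) := by
    intro σ
    by_cases h : A σ = 0 <;> simp [h]
  have step2 : ∀ σ, (if A σ = 0 then (0:ℝ) else B σ * C σ / D σ)
      ≤ (if D σ = 0 then 0 else B σ * C σ / D σ) := by
    intro σ
    by_cases h : A σ = 0
    · rw [if_pos h]
      split
      · exact le_rfl
      · exact div_nonneg (mul_nonneg (hB σ) (hC σ)) (hD σ)
    · have hA0 : 0 < A σ := lt_of_le_of_ne (hA σ) (Ne.symm h)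
      have hD0 : 0 < D σ := lt_of_lt_of_le hA0 (had σ)
      rw [if_neg h, if_neg hD0.ne']
  have hsum2 : ∑ σ, (if A σ = 0 then (0:ℝ) else B σ * C σ / D σ) ≤ 1 :=
    le_trans (Finset.sum_le_sum fun σ _ => step2 σ) hcount
  have main : 0 ≤ ∑ σ, (if A σ = 0 then 0 else A σ - B σ * C σ / D σ) := by
    rw [Finset.sum_congr rfl fun σ _ => step1 σ, Finset.sum_sub_distrib, hsum]
    linarith
  exact le_trans main (Finset.sum_le_sum fun σ _ => key σ)

lemma sum_rot {α β γ : Type*} [Fintype α] [Fintype β] [Fintype γ] (f : α → β → γ → ℝ) :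
    ∑ x, ∑ y, ∑ z, f x y z = ∑ z, ∑ x, ∑ y, f x y z :=
  calc ∑ x, ∑ y, ∑ z, f x y z = ∑ x, ∑ z, ∑ y, f x y z :=
        Finset.sum_congr rfl (fun _ _ => Finset.sum_comm)
    _ = ∑ z, ∑ x, ∑ y, f x y z := Finset.sum_comm

set_option maxHeartbeats 1000000 in
/-- Nonnegativity of conditional mutual information (submodularity of entropy). -/
lemma cmi_nonneg (p : Ω → ℝ) (hp : ∀ ω, 0 ≤ p ω) (hp1 : ∑ ω, p ω = 1)
    (X : Ω → S) (Y : Ω → T) (Z : Ω → U) : 0 ≤ cmi p X Y Z := by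
  classical
  have eB : (ent p fun ω => (X ω, Z ω))
      = -∑ σ : S × T × U, (prob p fun ω => (X ω, Y ω, Z ω) = σ)
        * Real.log (prob p fun ω => (X ω, Z ω) = (σ.1, σ.2.2)) :=
    ent_comp p (fun ω => (X ω, Y ω, Z ω)) (fun σ => (σ.1, σ.2.2))
  have eC : (ent p fun ω => (Y ω, Z ω))
      = -∑ σ : S × T × U, (prob p fun ω => (X ω, Y ω, Z ω) = σ)
        * Real.log (prob p fun ω => (Y ω, Z ω) = σ.2) :=
    ent_comp p (fun ω => (X ω, Y ω, Z ω)) (fun σ => σ.2)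
  have eD : ent p Z
      = -∑ σ : S × T × U, (prob p fun ω => (X ω, Y ω, Z ω) = σ)
        * Real.log (prob p fun ω => Z ω = σ.2.2) :=
    ent_comp p (fun ω => (X ω, Y ω, Z ω)) (fun σ => σ.2.2)
  have eA : (ent p fun ω => (X ω, Y ω, Z ω))
      = -∑ σ : S × T × U, (prob p fun ω => (X ω, Y ω, Z ω) = σ)
        * Real.log (prob p fun ω => (X ω, Y ω, Z ω) = σ) := rfl
  have ecmi : cmi p X Y Z = ∑ σ : S × T × U, (prob p fun ω => (X ω, Y ω, Z ω) = σ) *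
      (Real.log (prob p fun ω => (X ω, Y ω, Z ω) = σ)
        + Real.log (prob p fun ω => Z ω = σ.2.2)
        - Real.log (prob p fun ω => (X ω, Z ω) = (σ.1, σ.2.2))
        - Real.log (prob p fun ω => (Y ω, Z ω) = σ.2)) := by
    unfold cmi
    rw [eA, eB, eC, eD]
    rw [show ∑ σ : S × T × U, (prob p fun ω => (X ω, Y ω, Z ω) = σ) *
      (Real.log (prob p fun ω => (X ω, Y ω, Z ω) = σ)
        + Real.log (prob p fun ω => Z ω = σ.2.2)
        - Real.log (prob p fun ω => (X ω, Z ω) = (σ.1, σ.2.2))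
        - Real.log (prob p fun ω => (Y ω, Z ω) = σ.2))
      = (∑ σ : S × T × U, (prob p fun ω => (X ω, Y ω, Z ω) = σ)
          * Real.log (prob p fun ω => (X ω, Y ω, Z ω) = σ))
        + (∑ σ : S × T × U, (prob p fun ω => (X ω, Y ω, Z ω) = σ)
          * Real.log (prob p fun ω => Z ω = σ.2.2))
        - (∑ σ : S × T × U, (prob p fun ω => (X ω, Y ω, Z ω) = σ)
          * Real.log (prob p fun ω => (X ω, Z ω) = (σ.1, σ.2.2)))
        - (∑ σ : S × T × U, (prob p fun ω => (X ω, Y ω, Z ω) = σ)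
          * Real.log (prob p fun ω => (Y ω, Z ω) = σ.2)) from by
      rw [← Finset.sum_add_distrib, ← Finset.sum_sub_distrib, ← Finset.sum_sub_distrib]
      exact Finset.sum_congr rfl fun σ _ => by ring]
    ring
  rw [ecmi]
  have hcount : ∑ σ : S × T × U, (if (prob p fun ω => Z ω = σ.2.2) = 0 then 0 else
      (prob p fun ω => (X ω, Z ω) = (σ.1, σ.2.2)) * (prob p fun ω => (Y ω, Z ω) = σ.2)
        / (prob p fun ω => Z ω = σ.2.2)) ≤ 1 := by
    simp only [Fintype.sum_prod_type]
    rw [sum_rot (fun x y z => (if (prob p fun ω => Z ω = z) = 0 then 0 else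
      (prob p fun ω => (X ω, Z ω) = (x, z)) * (prob p fun ω => (Y ω, Z ω) = (y, z))
        / (prob p fun ω => Z ω = z)))]
    have hz : ∀ z : U, (∑ x, ∑ y, (if (prob p fun ω => Z ω = z) = 0 then 0 else
        (prob p fun ω => (X ω, Z ω) = (x, z)) * (prob p fun ω => (Y ω, Z ω) = (y, z))
          / (prob p fun ω => Z ω = z))) = prob p (fun ω => Z ω = z) := by
      intro z
      by_cases hd : (prob p fun ω => Z ω = z) = 0
      · simp [hd]
      · simp only [if_neg hd]
        rw [show (∑ x, ∑ y, (prob p fun ω => (X ω, Z ω) = (x, z))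
              * (prob p fun ω => (Y ω, Z ω) = (y, z)) / (prob p fun ω => Z ω = z))
            = (∑ x, ∑ y, (prob p fun ω => (X ω, Z ω) = (x, z))
              * (prob p fun ω => (Y ω, Z ω) = (y, z))) / (prob p fun ω => Z ω = z) from by
          rw [Finset.sum_div]
          exact Finset.sum_congr rfl fun x _ => by rw [Finset.sum_div]]
        rw [← Finset.sum_mul_sum]
        rw [prob_marg p X Z z, prob_marg p Y Z z]
        field_simp
    rw [Finset.sum_congr rfl fun z _ => hz z, sum_prob p Z, hp1]
  refine sum_core
    (fun σ : S × T × U => prob p fun ω => (X ω, Y ω, Z ω) = σ)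
    (fun σ : S × T × U => prob p fun ω => (X ω, Z ω) = (σ.1, σ.2.2))
    (fun σ : S × T × U => prob p fun ω => (Y ω, Z ω) = σ.2)
    (fun σ : S × T × U => prob p fun ω => Z ω = σ.2.2)
    (fun σ => prob_nonneg p hp _) (fun σ => prob_nonneg p hp _)
    (fun σ => prob_nonneg p hp _) (fun σ => prob_nonneg p hp _)
    (fun σ => prob_le_comp p hp (fun ω => (X ω, Y ω, Z ω)) (fun σ => (σ.1, σ.2.2)) σ)
    (fun σ => prob_le_comp p hp (fun ω => (X ω, Y ω, Z ω)) (fun σ => σ.2) σ)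
    (fun σ => prob_le_comp p hp (fun ω => (X ω, Y ω, Z ω)) (fun σ => σ.2.2) σ)
    ((sum_prob p _).trans hp1)
    hcount

lemma prob_pair_left (p : Ω → ℝ) (X : Ω → S) (Y : Ω → T) (f : S → T)
    (h : ∀ ω, Y ω = f (X ω)) (s : S) (t : T) :
    prob p (fun ω => (X ω, Y ω) = (s, t))
      = if t = f s then prob p (fun ω => X ω = s) else 0 := by
  classical
  by_cases ht : t = f s
  · rw [if_pos ht]
    refine prob_congr p fun ω => ?_
    rw [Prod.ext_iff]
    constructor
    · exact fun h' => h'.1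
    · intro h1; exact ⟨h1, by rw [h ω, h1, ht]⟩
  · rw [if_neg ht]
    refine prob_false p fun ω h' => ?_
    rw [Prod.ext_iff] at h'
    obtain ⟨h1, h2⟩ := h'
    simp only at h1 h2
    exact ht (by rw [← h2, h ω, h1])

lemma ent_pair_of_fun (p : Ω → ℝ) (X : Ω → S) (Y : Ω → T) (f : S → T)
    (h : ∀ ω, Y ω = f (X ω)) :
    ent p (fun ω => (X ω, Y ω)) = ent p X := by
  classical
  unfold ent
  rw [Fintype.sum_prod_type]
  congr 1
  refine Finset.sum_congr rfl fun s _ => ?_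
  have : ∀ t : T, prob p (fun ω => (X ω, Y ω) = (s, t))
        * Real.log (prob p (fun ω => (X ω, Y ω) = (s, t)))
      = if t = f s then prob p (fun ω => X ω = s)
        * Real.log (prob p (fun ω => X ω = s)) else 0 := by
    intro t
    rw [prob_pair_left p X Y f h s t]
    by_cases ht : t = f s <;> simp [ht]
  rw [Finset.sum_congr rfl fun t _ => this t, Finset.sum_ite_eq']
  simp

lemma ent_equiv (p : Ω → ℝ) (X : Ω → S) (e : S ≃ T) :
    ent p (fun ω => e (X ω)) = ent p X := by
  unfold ent
  rw [← Equiv.sum_comp e (fun t => prob p (fun ω => e (X ω) = t)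
    * Real.log (prob p (fun ω => e (X ω) = t)))]
  congr 1
  refine Finset.sum_congr rfl fun s _ => ?_
  have : prob p (fun ω => e (X ω) = e s) = prob p (fun ω => X ω = s) :=
    prob_congr p fun ω => e.injective.eq_iff
  rw [this]

/-- Entropy is invariant under mutually-determining recodings. -/
lemma ent_eq_of_inv (p : Ω → ℝ) (X : Ω → S) (Y : Ω → T) (f : S → T) (g : T → S)
    (h1 : ∀ ω, Y ω = f (X ω)) (h2 : ∀ ω, X ω = g (Y ω)) : ent p X = ent p Y := by
  have e1 : ent p (fun ω => (X ω, Y ω)) = ent p X := ent_pair_of_fun p X Y f h1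
  have e2 : ent p (fun ω => (Y ω, X ω)) = ent p Y := ent_pair_of_fun p Y X g h2
  have e3 : ent p (fun ω => (Equiv.prodComm S T) ((X ω, Y ω))) = ent p (fun ω => (X ω, Y ω)) :=
    ent_equiv p _ (Equiv.prodComm S T)
  have e4 : ent p (fun ω => (Y ω, X ω))
      = ent p (fun ω => (Equiv.prodComm S T) ((X ω, Y ω))) := rfl
  rw [← e1, ← e2, e4, e3]

lemma ent_le_pair_right (p : Ω → ℝ) (hp : ∀ ω, 0 ≤ p ω) (hp1 : ∑ ω, p ω = 1)
    (X : Ω → S) (Y : Ω → T) : ent p Y ≤ ent p (fun ω => (X ω, Y ω)) := by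
  have h := cmi_nonneg p hp hp1 X X Y
  simp only [cmi] at h
  have e : ent p (fun ω => (X ω, X ω, Y ω)) = ent p (fun ω => (X ω, Y ω)) :=
    ent_eq_of_inv p _ _ (fun s => s.2) (fun s => (s.1, s)) (fun ω => rfl) (fun ω => rfl)
  linarith

end Aux

end PaperIngleton

namespace PaperIngleton

theorem stmt16 {Ω S T U V U' V' R : Type} [Fintype Ω] [Fintype S] [Fintype T]
    [Fintype U] [Fintype V] [Fintype U'] [Fintype V'] [Fintype R]
    (p : Ω → ℝ) (hp : ∀ ω, 0 ≤ p ω) (hp1 : ∑ ω, p ω = 1)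
    (X : Ω → S) (Y : Ω → T) (A : Ω → U) (B : Ω → V)
    (A' : Ω → U') (B' : Ω → V') (W : Ω → R) (δ : ℝ) (hδ : 0 ≤ δ)
    (hWXY : condEnt p W (fun ω => (X ω, Y ω)) = 0)
    (hWX : max (condEnt p W X) (condEnt p W Y) ≤ δ)
    (hWA : condEnt p W A ≤ cmi p X Y A - cmi p X Y W + δ)
    (hWB : condEnt p W B ≤ cmi p X Y B - cmi p X Y W + δ) :
    2 * mi p X Y ≤ cmi p X Y A + cmi p X Y B + mi p A B
      + cmi p X Y A' + cmi p X Y B' + mi p A' B' + 6 * δ := by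
  -- (G1)  I(X:Y) ≤ I(X:W) + I(X:Y|W)
  have G1 : mi p X Y ≤ mi p X W + cmi p X Y W := by
    have c1 := cmi_nonneg p hp hp1 X W Y
    have e1 : ent p (fun ω => (W ω, Y ω)) = ent p (fun ω => (Y ω, W ω)) :=
      ent_eq_of_inv p _ _ (fun s => (s.2, s.1)) (fun s => (s.2, s.1))
        (fun ω => rfl) (fun ω => rfl)
    have e2 : ent p (fun ω => (X ω, W ω, Y ω)) = ent p (fun ω => (X ω, Y ω, W ω)) :=
      ent_eq_of_inv p _ _ (fun s => (s.1, s.2.2, s.2.1)) (fun s => (s.1, s.2.2, s.2.1))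
        (fun ω => rfl) (fun ω => rfl)
    simp only [mi, cmi] at c1 ⊢
    linarith
  -- (G2)  I(X:W) ≤ H(W)
  have G2 : mi p X W ≤ ent p W := by
    have m1 := ent_le_pair_right p hp hp1 W X
    have e3 : ent p (fun ω => (W ω, X ω)) = ent p (fun ω => (X ω, W ω)) :=
      ent_eq_of_inv p _ _ (fun s => (s.2, s.1)) (fun s => (s.2, s.1))
        (fun ω => rfl) (fun ω => rfl)
    simp only [mi]
    linarith
  -- (G3)  H(W) ≤ H(W|A) + H(W|B) + I(A:B), purely Shannon-type
  have G3 : ∀ {κ κ' : Type} [Fintype κ] [Fintype κ'] (C : Ω → κ) (D : Ω → κ'),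
      ent p W ≤ condEnt p W C + condEnt p W D + mi p C D := by
    intro κ κ' _ _ C D
    have c2 := cmi_nonneg p hp hp1 C D W
    have m2 := ent_le_pair_right p hp hp1 W (fun ω => (C ω, D ω))
    have e4 : ent p (fun ω => (W ω, (C ω, D ω))) = ent p (fun ω => (C ω, D ω, W ω)) :=
      ent_eq_of_inv p _ _ (fun s => (s.2.1, (s.2.2, s.1))) (fun s => (s.2.2, (s.1, s.2.1)))
        (fun ω => rfl) (fun ω => rfl)
    have e5 : ent p (fun ω => (C ω, W ω)) = ent p (fun ω => (W ω, C ω)) :=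
      ent_eq_of_inv p _ _ (fun s => (s.2, s.1)) (fun s => (s.2, s.1))
        (fun ω => rfl) (fun ω => rfl)
    have e6 : ent p (fun ω => (D ω, W ω)) = ent p (fun ω => (W ω, D ω)) :=
      ent_eq_of_inv p _ _ (fun s => (s.2, s.1)) (fun s => (s.2, s.1))
        (fun ω => rfl) (fun ω => rfl)
    simp only [cmi] at c2
    simp only [condEnt, mi]
    linarith
  -- (G4)  H(W|A') ≤ I(X:Y|A') + H(W|X) + H(W|Y), purely Shannon-type
  have G4 : ∀ {κ : Type} [Fintype κ] (C : Ω → κ),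
      condEnt p W C ≤ cmi p X Y C + condEnt p W X + condEnt p W Y := by
    intro κ _ C
    have c3 := cmi_nonneg p hp hp1 W C Y
    have c4 := cmi_nonneg p hp hp1 X Y (fun ω => (W ω, C ω))
    have c5 := cmi_nonneg p hp hp1 W C X
    have m3 := ent_le_pair_right p hp hp1 W (fun ω => (Y ω, X ω, C ω))
    have e7 : ent p (fun ω => (C ω, Y ω)) = ent p (fun ω => (Y ω, C ω)) :=
      ent_eq_of_inv p _ _ (fun s => (s.2, s.1)) (fun s => (s.2, s.1))
        (fun ω => rfl) (fun ω => rfl)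
    have e8 : ent p (fun ω => (W ω, C ω, Y ω)) = ent p (fun ω => (W ω, Y ω, C ω)) :=
      ent_eq_of_inv p _ _ (fun s => (s.1, s.2.2, s.2.1)) (fun s => (s.1, s.2.2, s.2.1))
        (fun ω => rfl) (fun ω => rfl)
    have e10 : ent p (fun ω => (X ω, W ω, C ω)) = ent p (fun ω => (W ω, X ω, C ω)) :=
      ent_eq_of_inv p _ _ (fun s => (s.2.1, s.1, s.2.2)) (fun s => (s.2.1, s.1, s.2.2))
        (fun ω => rfl) (fun ω => rfl)
    have e11 : ent p (fun ω => (X ω, Y ω, W ω, C ω))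
        = ent p (fun ω => (W ω, Y ω, X ω, C ω)) :=
      ent_eq_of_inv p _ _ (fun s => (s.2.2.1, s.2.1, s.1, s.2.2.2))
        (fun s => (s.2.2.1, s.2.1, s.1, s.2.2.2)) (fun ω => rfl) (fun ω => rfl)
    have e12 : ent p (fun ω => (X ω, Y ω, C ω)) = ent p (fun ω => (Y ω, X ω, C ω)) :=
      ent_eq_of_inv p _ _ (fun s => (s.2.1, s.1, s.2.2)) (fun s => (s.2.1, s.1, s.2.2))
        (fun ω => rfl) (fun ω => rfl)
    have e13 : ent p (fun ω => (C ω, X ω)) = ent p (fun ω => (X ω, C ω)) :=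
      ent_eq_of_inv p _ _ (fun s => (s.2, s.1)) (fun s => (s.2, s.1))
        (fun ω => rfl) (fun ω => rfl)
    have e14 : ent p (fun ω => (W ω, C ω, X ω)) = ent p (fun ω => (W ω, X ω, C ω)) :=
      ent_eq_of_inv p _ _ (fun s => (s.1, s.2.2, s.2.1)) (fun s => (s.1, s.2.2, s.2.1))
        (fun ω => rfl) (fun ω => rfl)
    have e15 : ent p (fun ω => (Y ω, W ω, C ω)) = ent p (fun ω => (W ω, Y ω, C ω)) :=
      ent_eq_of_inv p _ _ (fun s => (s.2.1, s.1, s.2.2)) (fun s => (s.2.1, s.1, s.2.2))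
        (fun ω => rfl) (fun ω => rfl)
    simp only [cmi] at c3 c4 c5
    simp only [cmi, condEnt]
    linarith
  have hWX1 : condEnt p W X ≤ δ := le_trans (le_max_left _ _) hWX
  have hWX2 : condEnt p W Y ≤ δ := le_trans (le_max_right _ _) hWX
  have G3ab := G3 A B
  have G3ab' := G3 A' B'
  have G4a := G4 A'
  have G4b := G4 B'
  linarith

end PaperIngleton
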